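/- Assume V ≥ p(S) and that p_k = γ_k·α_k for all k ∈ S. Fix i ∈ S and let E = {k ∈ S : γ_k = γ_i} and G = {k ∈ S : γ_k > γ_i}. Suppose G is a pure strategy Nash equilibrium and g(G) = γ_i. Then for every Y ⊆ E: G ∪ Y is a pure strategy Nash equilibrium, G ∪ Y ≈ G (i.e., U_k(G ∪ Y) = U_k(G) for all k ∈ S), and U_k(G ∪ Y) = p_k for all k ∈ E. -/

import Mathlib

open Finset

variable {ι : Type*} [DecidableEq ι]

/-- `f(X) = β + Σ_{i ∈ X} α_i`. -/
noncomputable def fval (β : ℝ) (α : ι → ℝ) (X : Finset ι) : ℝ := β + ∑ i ∈ X, α i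

/-- `p(X) = Σ_{i ∈ X} p_i`. -/
noncomputable def psum (p : ι → ℝ) (X : Finset ι) : ℝ := ∑ i ∈ X, p i

/-- The payout `U_i(K)` in the Liquidity Event game, where `K ⊆ S` is the set of players
who cash out.  For `i ∈ K` it is `p_i` if `p(K) ≤ V` and the pro-rata `p_i·V/p(K)` otherwise;
for a converting player `i ∈ S \ K` it is `(p_i/(γ_i·f(S\K)))·(V − P(K))`
where `P(K) = min(p(K), V)` is the total cashout payment. -/
noncomputable def payout (S : Finset ι) (V β : ℝ) (p γ α : ι → ℝ)
    (K : Finset ι) (i : ι) : ℝ :=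
  if i ∈ K then (if psum p K ≤ V then p i else p i * V / psum p K)
  else (p i / (γ i * fval β α (S \ K))) * (V - min (psum p K) V)

/-- The profile obtained from `K` when player `i` unilaterally changes their move. -/
def deviate (K : Finset ι) (i : ι) : Finset ι := if i ∈ K then K.erase i else insert i K

/-- `K` is a pure strategy Nash equilibrium of the Liquidity Event game. -/
def isNash (S : Finset ι) (V β : ℝ) (p γ α : ι → ℝ) (K : Finset ι) : Prop :=
  K ⊆ S ∧ ∀ i ∈ S, payout S V β p γ α (deviate K i) i ≤ payout S V β p γ α K i

/-- `g(K) = (V − p(K)) / f(S \ K)`. -/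
noncomputable def gval (S : Finset ι) (V β : ℝ) (p α : ι → ℝ) (K : Finset ι) : ℝ :=
  (V - psum p K) / fval β α (S \ K)

/-- Condition (WD): for every nonempty `C ⊆ S`, `Σ_{i∈C} p_i/(γ_i·f(C)) < 1`. -/
def WD (S : Finset ι) (β : ℝ) (p γ α : ι → ℝ) : Prop :=
  ∀ C ⊆ S, C.Nonempty → ∑ i ∈ C, p i / (γ i * fval β α C) < 1

/-- pre-money case (`p_k = γ_k·α_k` everywhere), `V ≥ p(S)`:
if `G = {k : γ_k > γ_i}` is a Nash equilibrium with `g(G) = γ_i`, then for every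
`Y ⊆ E = {k : γ_k = γ_i}`, `G ∪ Y` is a Nash equilibrium, `G ∪ Y ≈ G`, and every
`k ∈ E` receives exactly `p_k` in `G ∪ Y`. -/
theorem stmt6_nash_shift_converse
    (S : Finset ι) (hS : S.Nonempty)
    (V β : ℝ) (hV : 0 < V) (hβ : 0 < β)
    (p γ α : ι → ℝ)
    (hp : ∀ i ∈ S, 0 < p i) (hγ : ∀ i ∈ S, 0 < γ i) (hα : ∀ i ∈ S, 0 ≤ α i)
    (hge : psum p S ≤ V)
    (hpre : ∀ k ∈ S, p k = γ k * α k)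
    (i : ι) (hi : i ∈ S)
    (hG : isNash S V β p γ α (S.filter (fun k => γ i < γ k)))
    (hg : gval S V β p α (S.filter (fun k => γ i < γ k)) = γ i) :
    ∀ Y ⊆ S.filter (fun k => γ k = γ i),
      isNash S V β p γ α (S.filter (fun k => γ i < γ k) ∪ Y) ∧
      (∀ k ∈ S, payout S V β p γ α (S.filter (fun k => γ i < γ k) ∪ Y) k
          = payout S V β p γ α (S.filter (fun k => γ i < γ k)) k) ∧
      (∀ k ∈ S.filter (fun k => γ k = γ i),
        payout S V β p γ α (S.filter (fun k => γ i < γ k) ∪ Y) k = p k) := by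
  intro Y hY
  set G := S.filter (fun k => γ i < γ k) with hGdef
  have hGS : G ⊆ S := filter_subset _ _
  have hYE : ∀ k ∈ Y, k ∈ S ∧ γ k = γ i := by
    intro k hk
    exact mem_filter.1 (hY hk)
  have hYS : Y ⊆ S := fun k hk => (hYE k hk).1
  have hKS : G ∪ Y ⊆ S := union_subset hGS hYS
  have hdisj : Disjoint G Y := by
    rw [Finset.disjoint_left]
    intro a haG haY
    have h1 : γ i < γ a := (mem_filter.1 haG).2
    have h2 : γ a = γ i := (hYE a haY).2
    simp [h2] at h1
  set K := G ∪ Y with hKdef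
  -- generic bounds
  have hple : ∀ X ⊆ S, psum p X ≤ V := by
    intro X hX
    refine le_trans ?_ hge
    exact Finset.sum_le_sum_of_subset_of_nonneg hX (fun k hk _ => (hp k hk).le)
  have hfpos : ∀ X : Finset ι, X ⊆ S → 0 < fval β α X := by
    intro X hX
    have : 0 ≤ ∑ k ∈ X, α k := Finset.sum_nonneg fun k hk => hα k (hX hk)
    unfold fval; linarith
  have hFKpos : 0 < fval β α (S \ K) := hfpos _ sdiff_subset
  have hFGpos : 0 < fval β α (S \ G) := hfpos _ sdiff_subset
  -- key identity for G
  have hVG : V - psum p G = γ i * fval β α (S \ G) := by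
    unfold gval at hg
    exact (div_eq_iff hFGpos.ne').1 hg
  have hYsubSG : Y ⊆ S \ G := by
    intro a ha
    rw [mem_sdiff]
    exact ⟨hYS ha, Finset.disjoint_right.1 hdisj ha⟩
  have hsplitS : S \ K = (S \ G) \ Y := by
    ext a
    simp only [hKdef, mem_sdiff, mem_union]
    tauto
  have hfsplit : fval β α (S \ G) = fval β α (S \ K) + ∑ k ∈ Y, α k := by
    have h := Finset.sum_sdiff (f := α) hYsubSG
    unfold fval
    rw [hsplitS]
    linarith
  have hpsplit : psum p K = psum p G + psum p Y := by
    unfold psum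
    rw [hKdef]
    exact Finset.sum_union hdisj
  have hpY : psum p Y = γ i * ∑ k ∈ Y, α k := by
    unfold psum
    rw [Finset.mul_sum]
    refine Finset.sum_congr rfl fun k hk => ?_
    obtain ⟨hkS, hke⟩ := hYE k hk
    rw [hpre k hkS, hke]
  -- key identity for K
  have hVK : V - psum p K = γ i * fval β α (S \ K) := by
    have h1 : γ i * fval β α (S \ G)
        = γ i * fval β α (S \ K) + γ i * ∑ k ∈ Y, α k := by
      rw [hfsplit]; ring
    linarith
  have hKle : psum p K ≤ V := hple _ hKS
  have hGle : psum p G ≤ V := hple _ hGS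
  -- payout computations
  have hpayK : ∀ k, k ∈ K → payout S V β p γ α K k = p k := by
    intro k hk
    simp [payout, hk, hKle]
  have hpayKc : ∀ k, k ∈ S → k ∉ K → payout S V β p γ α K k = α k * γ i := by
    intro k hkS hk
    have hγk := (hγ k hkS).ne'
    unfold payout
    rw [if_neg hk, min_eq_left hKle, hVK, hpre k hkS]
    field_simp
  have hpayG : ∀ k, k ∈ G → payout S V β p γ α G k = p k := by
    intro k hk
    simp [payout, hk, hGle]
  have hpayGc : ∀ k, k ∈ S → k ∉ G → payout S V β p γ α G k = α k * γ i := by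
    intro k hkS hk
    have hγk := (hγ k hkS).ne'
    unfold payout
    rw [if_neg hk, min_eq_left hGle, hVG, hpre k hkS]
    field_simp
  refine ⟨⟨hKS, ?_⟩, ?_, ?_⟩
  · -- Nash
    intro k hkS
    by_cases hkK : k ∈ K
    · -- casher deviates to converting
      rw [deviate, if_pos hkK, hpayK k hkK]
      have hkKer : k ∉ K.erase k := notMem_erase _ _
      have herS : K.erase k ⊆ S := (erase_subset _ _).trans hKS
      have hperase : psum p (K.erase k) = psum p K - p k := by
        have h := Finset.sum_erase_add K p hkK
        unfold psum
        linarith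
      have hsdiffer : S \ K.erase k = insert k (S \ K) := by
        ext a
        simp only [mem_sdiff, mem_erase, mem_insert, not_and]
        by_cases ha : a = k
        · subst ha; simp [hkS, hkK]
        · simp [ha]
      have hkns : k ∉ S \ K := by simp [mem_sdiff, hkK]
      have hfins : fval β α (S \ K.erase k) = fval β α (S \ K) + α k := by
        rw [hsdiffer]
        unfold fval
        rw [Finset.sum_insert hkns]
        ring
      have hperle : psum p (K.erase k) ≤ V := hple _ herS
      unfold payout
      rw [if_neg hkKer, min_eq_left hperle, hperase, hfins]
      have hV' : V - (psum p K - p k) = γ i * fval β α (S \ K) + p k := by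
        linarith
      rw [hV']
      have hγk := hγ k hkS
      have hpk := hp k hkS
      have hαk := hα k hkS
      have hγik : γ i ≤ γ k := by
        rcases mem_union.1 (hKdef ▸ hkK) with h | h
        · exact (mem_filter.1 h).2.le
        · exact ((hYE k h).2).ge
      have hden : 0 < γ k * (fval β α (S \ K) + α k) := by
        apply mul_pos hγk
        linarith
      rw [div_mul_eq_mul_div, div_le_iff₀ hden]
      have hpk' := hpre k hkS
      nlinarith [mul_le_mul_of_nonneg_left (mul_le_mul_of_nonneg_right hγik hFKpos.le) hpk.le]
    · -- converter deviates to cashing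
      rw [deviate, if_neg hkK, hpayKc k hkS hkK]
      have hins : psum p (insert k K) ≤ V := hple _ (insert_subset hkS hKS)
      unfold payout
      rw [if_pos (mem_insert_self k K), if_pos hins]
      have hkG : k ∉ G := fun h => hkK (hKdef ▸ mem_union_left _ h)
      have hγki : γ k ≤ γ i := le_of_not_gt (fun h => hkG (mem_filter.2 ⟨hkS, h⟩))
      have hαk := hα k hkS
      have := hpre k hkS
      nlinarith
  · -- payoff equivalence with G
    intro k hkS
    by_cases hkK : k ∈ K
    · rw [hpayK k hkK]
      by_cases hkG : k ∈ G
      · rw [hpayG k hkG]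
      · have hkY : k ∈ Y := by
          rcases mem_union.1 (hKdef ▸ hkK) with h | h
          · exact absurd h hkG
          · exact h
        rw [hpayGc k hkS hkG, hpre k hkS, (hYE k hkY).2]
        ring
    · have hkG : k ∉ G := fun h => hkK (hKdef ▸ mem_union_left _ h)
      rw [hpayKc k hkS hkK, hpayGc k hkS hkG]
  · -- members of E get exactly p k
    intro k hkE
    obtain ⟨hkS, hke⟩ := mem_filter.1 hkE
    by_cases hkK : k ∈ K
    · exact hpayK k hkK
    · rw [hpayKc k hkS hkK, ← hke, hpre k hkS]
      ring
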